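/- Let S = k[y₀,…,y₄] and f₀,…,f₆ be the seven cubics defining the projected Veronese surface in ℙ⁴ (as listed). Then the element Γ = −y₁∧y₂∧y₃ ⊗ f₀ + (y₀∧y₂∧y₃ − y₁∧y₂∧y₄) ⊗ f₁ + (y₀∧y₂∧y₄ − y₁∧y₃∧y₄) ⊗ f₂ + y₀∧y₃∧y₄ ⊗ f₃ − y₀∧y₁∧y₃ ⊗ f₄ + (−y₀∧y₁∧y₄ + y₂∧y₃∧y₄) ⊗ f₅ + (y₀∧y₁∧y₂ − y₂∧y₃∧y₄) ⊗ f₆ ∈ ⋀³S₁ ⊗ S₃ is annihilated by the Koszul differential into ⋀²S₁ ⊗ S₄, and Γ ≠ 0. -/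
import Mathlib

open MvPolynomial TensorProduct ExteriorAlgebra

variable (k : Type*) [Field k]

/-- `y_a ∧ y_b ∧ y_c` in the exterior algebra of the linear forms. -/
noncomputable def w3 (a b c : Fin 5) : ExteriorAlgebra k (MvPolynomial (Fin 5) k) :=
  ι k (X a) * ι k (X b) * ι k (X c)

/-- The simple tensor `(y_a ∧ y_b ∧ y_c) ⊗ f ∈ ⋀³S₁ ⊗ S`. -/
noncomputable def wT (a b c : Fin 5) (f : MvPolynomial (Fin 5) k) :
    ExteriorAlgebra k (MvPolynomial (Fin 5) k) ⊗[k] MvPolynomial (Fin 5) k :=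
  w3 k a b c ⊗ₜ[k] f

/-- The Koszul differential applied to `y_a ∧ y_b ∧ y_c ⊗ f`, namely
`a∧b ⊗ cf − a∧c ⊗ bf + b∧c ⊗ af`. -/
noncomputable def dK3 (a b c : Fin 5) (f : MvPolynomial (Fin 5) k) :
    ExteriorAlgebra k (MvPolynomial (Fin 5) k) ⊗[k] MvPolynomial (Fin 5) k :=
  (ι k (X a) * ι k (X b)) ⊗ₜ[k] (X c * f) - (ι k (X a) * ι k (X c)) ⊗ₜ[k] (X b * f)
    + (ι k (X b) * ι k (X c)) ⊗ₜ[k] (X a * f)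

noncomputable def coords3 : MvPolynomial (Fin 5) k →ₗ[k] (Fin 3 → k) :=
  LinearMap.pi fun i => MvPolynomial.lcoeff k (Finsupp.single (![1, 2, 3] i : Fin 5) 1)

noncomputable def alt3 : MvPolynomial (Fin 5) k [⋀^Fin 3]→ₗ[k] k :=
  (Matrix.detRowAlternating : (Fin 3 → k) [⋀^Fin 3]→ₗ[k] k).compLinearMap (coords3 k)

noncomputable def Ffam : ∀ i, MvPolynomial (Fin 5) k [⋀^Fin i]→ₗ[k] k
  | 3 => alt3 k
  | _ => 0

noncomputable def phi : ExteriorAlgebra k (MvPolynomial (Fin 5) k) →ₗ[k] k :=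
  ExteriorAlgebra.liftAlternating (Ffam k)

theorem phi_w3 (a b c : Fin 5) :
    phi k (w3 k a b c) =
      Matrix.det (Matrix.of fun i j => coords3 k (![X a, X b, X c] i) j) := by
  have h : w3 k a b c = ι k (X a) * (ι k (X b) * (ι k (X c) * 1)) := by
    simp [w3, mul_assoc]
  rw [h, phi, liftAlternating_ι_mul, liftAlternating_ι_mul, liftAlternating_ι_mul,
    liftAlternating_one]
  show ((((Ffam k 3).curryLeft (X a)).curryLeft (X b)).curryLeft (X c)) 0 = _
  simp only [Ffam, AlternatingMap.curryLeft_apply_apply, alt3,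
    AlternatingMap.compLinearMap_apply]
  show Matrix.det (Matrix.of fun i => coords3 k
    (Matrix.vecCons (X a) (Matrix.vecCons (X b) (Matrix.vecCons (X c) 0)) i)) = _
  congr 1
  funext i j
  fin_cases i <;> rfl

theorem phi_val (a b c : Fin 5) :
    phi k (w3 k a b c) =
      coords3 k (X a) 0 * (coords3 k (X b) 1 * coords3 k (X c) 2
        - coords3 k (X c) 1 * coords3 k (X b) 2)
      - coords3 k (X b) 0 * (coords3 k (X a) 1 * coords3 k (X c) 2
        - coords3 k (X c) 1 * coords3 k (X a) 2)
      + coords3 k (X c) 0 * (coords3 k (X a) 1 * coords3 k (X b) 2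
        - coords3 k (X b) 1 * coords3 k (X a) 2) := by
  rw [phi_w3, Matrix.det_fin_three]
  simp [Matrix.of_apply]
  ring

theorem phiw_123 : phi k (w3 k 1 2 3) = 1 := by
  rw [phi_val]
  simp [coords3, MvPolynomial.coeff_X', Finsupp.single_eq_single_iff]

theorem phiw_023 : phi k (w3 k 0 2 3) = 0 := by
  rw [phi_val]
  simp [coords3, MvPolynomial.coeff_X', Finsupp.single_eq_single_iff]

theorem phiw_124 : phi k (w3 k 1 2 4) = 0 := by
  rw [phi_val]
  simp [coords3, MvPolynomial.coeff_X', Finsupp.single_eq_single_iff]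

theorem phiw_024 : phi k (w3 k 0 2 4) = 0 := by
  rw [phi_val]
  simp [coords3, MvPolynomial.coeff_X', Finsupp.single_eq_single_iff]

theorem phiw_134 : phi k (w3 k 1 3 4) = 0 := by
  rw [phi_val]
  simp [coords3, MvPolynomial.coeff_X', Finsupp.single_eq_single_iff]

theorem phiw_034 : phi k (w3 k 0 3 4) = 0 := by
  rw [phi_val]
  simp [coords3, MvPolynomial.coeff_X', Finsupp.single_eq_single_iff]

theorem phiw_013 : phi k (w3 k 0 1 3) = 0 := by
  rw [phi_val]
  simp [coords3, MvPolynomial.coeff_X', Finsupp.single_eq_single_iff]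

theorem phiw_014 : phi k (w3 k 0 1 4) = 0 := by
  rw [phi_val]
  simp [coords3, MvPolynomial.coeff_X', Finsupp.single_eq_single_iff]

theorem phiw_234 : phi k (w3 k 2 3 4) = 0 := by
  rw [phi_val]
  simp [coords3, MvPolynomial.coeff_X', Finsupp.single_eq_single_iff]

theorem phiw_012 : phi k (w3 k 0 1 2) = 0 := by
  rw [phi_val]
  simp [coords3, MvPolynomial.coeff_X', Finsupp.single_eq_single_iff]

noncomputable def psiE : MvPolynomial (Fin 5) k →ₗ[k] k :=
  (aeval (![1, 0, 0, 0, 0] : Fin 5 → k)).toLinearMap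

noncomputable def Lmap : ExteriorAlgebra k (MvPolynomial (Fin 5) k) ⊗[k]
    MvPolynomial (Fin 5) k →ₗ[k] k :=
  TensorProduct.lift (((LinearMap.mul k k).comp (phi k)).compl₂ (psiE k))

theorem Lmap_tmul (x : ExteriorAlgebra k (MvPolynomial (Fin 5) k))
    (f : MvPolynomial (Fin 5) k) : Lmap k (x ⊗ₜ[k] f) = phi k x * psiE k f := by
  simp [Lmap]

set_option maxHeartbeats 2000000 in
/-- For the seven cubics `f₀,…,f₆` defining the projected Veronese surface in `ℙ⁴`, the
element `Γ ∈ ⋀³S₁ ⊗ S₃` displayed in the paper is a nonzero Koszul cycle. -/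
theorem veronese_highest_koszul_cycle [CharZero k]
    (f0 f1 f2 f3 f4 f5 f6 : MvPolynomial (Fin 5) k)
    (hf0 : f0 = X 0 ^ 3 - X 0 * X 3 ^ 2 + X 0 * X 2 * X 4 + X 1 * X 3 * X 4 - X 0 * X 4 ^ 2)
    (hf1 : f1 = X 0 ^ 2 * X 1 - X 1 * X 3 ^ 2 + X 0 * X 3 * X 4)
    (hf2 : f2 = X 0 * X 1 ^ 2 + X 1 * X 2 * X 3 - X 0 * X 3 ^ 2)
    (hf3 : f3 = X 1 ^ 3 - X 1 * X 2 ^ 2 + X 0 * X 2 * X 3 - X 1 * X 3 ^ 2 + X 1 * X 2 * X 4)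
    (hf4 : f4 = X 0 ^ 2 * X 2 - X 2 * X 3 ^ 2 - X 1 ^ 2 * X 4 + X 2 ^ 2 * X 4
      + X 3 ^ 2 * X 4 - X 2 * X 4 ^ 2)
    (hf5 : f5 = X 0 * X 1 * X 2 + X 1 ^ 2 * X 3 - X 3 ^ 3 + X 2 * X 3 * X 4)
    (hf6 : f6 = X 0 ^ 2 * X 3 - X 3 ^ 3 + X 0 * X 1 * X 4 + X 2 * X 3 * X 4)
    (Γ : ExteriorAlgebra k (MvPolynomial (Fin 5) k) ⊗[k] MvPolynomial (Fin 5) k)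
    (hΓ : Γ = -wT k 1 2 3 f0 + wT k 0 2 3 f1 - wT k 1 2 4 f1 + wT k 0 2 4 f2
      - wT k 1 3 4 f2 + wT k 0 3 4 f3 - wT k 0 1 3 f4 - wT k 0 1 4 f5
      + wT k 2 3 4 f5 + wT k 0 1 2 f6 - wT k 2 3 4 f6) :
    (-dK3 k 1 2 3 f0 + dK3 k 0 2 3 f1 - dK3 k 1 2 4 f1 + dK3 k 0 2 4 f2
      - dK3 k 1 3 4 f2 + dK3 k 0 3 4 f3 - dK3 k 0 1 3 f4 - dK3 k 0 1 4 f5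
      + dK3 k 2 3 4 f5 + dK3 k 0 1 2 f6 - dK3 k 2 3 4 f6 = 0) ∧ Γ ≠ 0 := by
  constructor
  · have key : -dK3 k 1 2 3 f0 + dK3 k 0 2 3 f1 - dK3 k 1 2 4 f1 + dK3 k 0 2 4 f2
      - dK3 k 1 3 4 f2 + dK3 k 0 3 4 f3 - dK3 k 0 1 3 f4 - dK3 k 0 1 4 f5
      + dK3 k 2 3 4 f5 + dK3 k 0 1 2 f6 - dK3 k 2 3 4 f6
        = (ι k (X 0) * ι k (X 1)) ⊗ₜ[k] (-(X 3 * f4) - X 4 * f5 + X 2 * f6) + (ι k (X 0) * ι k (X 2)) ⊗ₜ[k] (X 3 * f1 + X 4 * f2 - X 1 * f6) + (ι k (X 0) * ι k (X 3)) ⊗ₜ[k] (-(X 2 * f1) + X 4 * f3 + X 1 * f4) + (ι k (X 0) * ι k (X 4)) ⊗ₜ[k] (-(X 2 * f2) - X 3 * f3 + X 1 * f5) + (ι k (X 1) * ι k (X 2)) ⊗ₜ[k] (-(X 3 * f0) - X 4 * f1 + X 0 * f6) + (ι k (X 1) * ι k (X 3)) ⊗ₜ[k] (X 2 * f0 - X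 4 * f2 - X 0 * f4) + (ι k (X 1) * ι k (X 4)) ⊗ₜ[k] (X 2 * f1 + X 3 * f2 - X 0 * f5) + (ι k (X 2) * ι k (X 3)) ⊗ₜ[k] (-(X 1 * f0) + X 0 * f1 + X 4 * f5 - X 4 * f6) + (ι k (X 2) * ι k (X 4)) ⊗ₜ[k] (-(X 1 * f1) + X 0 * f2 - X 3 * f5 + X 3 * f6) + (ι k (X 3) * ι k (X 4)) ⊗ₜ[k] (-(X 1 * f2) + X 0 * f3 + X 2 * f5 - X 2 * f6) := by
      simp only [dK3, TensorProduct.tmul_add, TensorProduct.tmul_sub, TensorProduct.tmul_neg]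
      abel
    have h01 : (-(X 3 * f4) - X 4 * f5 + X 2 * f6) = (0 : MvPolynomial (Fin 5) k) := by
      simp only [hf0, hf1, hf2, hf3, hf4, hf5, hf6]; ring
    have h02 : (X 3 * f1 + X 4 * f2 - X 1 * f6) = (0 : MvPolynomial (Fin 5) k) := by
      simp only [hf0, hf1, hf2, hf3, hf4, hf5, hf6]; ring
    have h03 : (-(X 2 * f1) + X 4 * f3 + X 1 * f4) = (0 : MvPolynomial (Fin 5) k) := by
      simp only [hf0, hf1, hf2, hf3, hf4, hf5, hf6]; ring
    have h04 : (-(X 2 * f2) - X 3 * f3 + X 1 * f5) = (0 : MvPolynomial (Fin 5) k) := by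
      simp only [hf0, hf1, hf2, hf3, hf4, hf5, hf6]; ring
    have h12 : (-(X 3 * f0) - X 4 * f1 + X 0 * f6) = (0 : MvPolynomial (Fin 5) k) := by
      simp only [hf0, hf1, hf2, hf3, hf4, hf5, hf6]; ring
    have h13 : (X 2 * f0 - X 4 * f2 - X 0 * f4) = (0 : MvPolynomial (Fin 5) k) := by
      simp only [hf0, hf1, hf2, hf3, hf4, hf5, hf6]; ring
    have h14 : (X 2 * f1 + X 3 * f2 - X 0 * f5) = (0 : MvPolynomial (Fin 5) k) := by
      simp only [hf0, hf1, hf2, hf3, hf4, hf5, hf6]; ring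
    have h23 : (-(X 1 * f0) + X 0 * f1 + X 4 * f5 - X 4 * f6) = (0 : MvPolynomial (Fin 5) k) := by
      simp only [hf0, hf1, hf2, hf3, hf4, hf5, hf6]; ring
    have h24 : (-(X 1 * f1) + X 0 * f2 - X 3 * f5 + X 3 * f6) = (0 : MvPolynomial (Fin 5) k) := by
      simp only [hf0, hf1, hf2, hf3, hf4, hf5, hf6]; ring
    have h34 : (-(X 1 * f2) + X 0 * f3 + X 2 * f5 - X 2 * f6) = (0 : MvPolynomial (Fin 5) k) := by
      simp only [hf0, hf1, hf2, hf3, hf4, hf5, hf6]; ring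
    rw [key, h01, h02, h03, h04, h12, h13, h14, h23, h24, h34]
    simp
  · have hL : Lmap k Γ = -1 := by
      rw [hΓ]
      simp only [wT, map_add, map_sub, map_neg, Lmap_tmul,
        phiw_123, phiw_023, phiw_124, phiw_024, phiw_134, phiw_034, phiw_013, phiw_014, phiw_234, phiw_012]
      have : psiE k f0 = 1 := by
        rw [hf0]
        simp [psiE]
      rw [this]
      ring
    intro h
    rw [h, map_zero] at hL
    exact absurd hL.symm (by norm_num)
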